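/- Let κ be an infinite cardinal, V : Type u, and E : V ≃ {S : Set V // #S ≤ κ} a bijection, with membership x ε y := x ∈ (E y).val. Let ∅' := E.symm ⟨∅, _⟩ (the name of the empty subset) and, for x : V, let s x := E.symm ⟨(E x).val ∪ {x}, _⟩ (the name of (E x).val ∪ {x}, which has cardinality at most κ since κ is infinite). Then there exists w : V such that: (Infinity-1) ∅' ε w and for all x, x ε w implies s x ε w; and (Infinity-2) for every predicate ψ : V → Prop, if ψ ∅' and (for all x, x ε w → ψ x → ψ (s x)), then for all x, x ε w implies ψ x. -/
import Mathlib


open Cardinal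

universe u

/-- The name of the empty subset of `V` in a fixpoint `E` of the κ-powerclass functor. -/
noncomputable def emptyName {κ : Cardinal.{u}} {V : Type u}
    (E : V ≃ {S : Set V // #S ≤ κ}) : V :=
  E.symm ⟨∅, by simp⟩

/-- The successor operation `x ↦ (E x).val ∪ {x}` in a fixpoint `E` of the κ-powerclass
functor, for an infinite cardinal `κ`. -/
noncomputable def succName {κ : Cardinal.{u}} (hκ : ℵ₀ ≤ κ) {V : Type u}
    (E : V ≃ {S : Set V // #S ≤ κ}) (x : V) : V :=
  E.symm ⟨(E x).val ∪ {x}, by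
    refine le_trans (mk_union_le _ _) (Cardinal.add_le_of_le hκ (E x).2 ?_)
    simpa using le_trans Cardinal.one_le_aleph0 hκ⟩

theorem powerclass_fixpoint_models_infinity (κ : Cardinal.{u}) (hκ : ℵ₀ ≤ κ)
    (V : Type u) (E : V ≃ {S : Set V // #S ≤ κ}) :
    ∃ w : V,
      -- Infinity-1
      (emptyName E ∈ (E w).val ∧ ∀ x : V, x ∈ (E w).val → succName hκ E x ∈ (E w).val) ∧
      -- Infinity-2
      (∀ ψ : V → Prop, ψ (emptyName E) →
        (∀ x : V, x ∈ (E w).val → ψ x → ψ (succName hκ E x)) →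
        ∀ x : V, x ∈ (E w).val → ψ x) := by
  set f : ℕ → V := fun n => Nat.rec (emptyName E) (fun _ y => succName hκ E y) n with hf
  have hcard : #(Set.range f) ≤ κ :=
    le_trans (Set.countable_range f).le_aleph0 hκ
  refine ⟨E.symm ⟨Set.range f, hcard⟩, ?_, ?_⟩
  · simp only [Equiv.apply_symm_apply]
    exact ⟨⟨0, rfl⟩, fun x ⟨n, hn⟩ => ⟨n + 1, by rw [← hn]⟩⟩
  · intro ψ h0 hs x hx
    simp only [Equiv.apply_symm_apply] at hx hs
    obtain ⟨n, rfl⟩ := hx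
    induction n with
    | zero => exact h0
    | succ n ih => exact hs (f n) ⟨n, rfl⟩ ih
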